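/- The 61 triangular lattice points in a closed regular hexagon of side length 4 form a 23-distance set whose squared distance set contains 64 but contains neither 61 nor 63; in particular its 23 distances are not the 23 smallest distances occurring in the triangular lattice. -/

import Mathlib

/-- Triangular lattice point a•(1,0) + b•(1/2, √3/2). -/
noncomputable def tri (a b : ℤ) : ℝ × ℝ :=
  ((a : ℝ) + (b : ℝ) / 2, (b : ℝ) * Real.sqrt 3 / 2)

/-- Squared Euclidean distance in the plane. -/
def sqd (p q : ℝ × ℝ) : ℝ := (p.1 - q.1) ^ 2 + (p.2 - q.2) ^ 2

/-- The triangular lattice. -/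
noncomputable def triLattice : Set (ℝ × ℝ) := {p | ∃ a b : ℤ, p = tri a b}

/-- Closed regular hexagon of side `k` centered at the origin with a vertex at `(k,0)`. -/
noncomputable def hexR (k : ℤ) : Set (ℝ × ℝ) :=
  convexHull ℝ ({tri k 0, tri 0 k, tri (-k) k, tri (-k) 0, tri 0 (-k), tri k (-k)} : Set (ℝ × ℝ))

/-- Closed (k, k+1)-equiangular hexagon with vertices at lattice points. -/
noncomputable def hexE (k : ℤ) : Set (ℝ × ℝ) :=
  convexHull ℝ ({tri k 0, tri k (k+1), tri 0 (2*k+1), tri (-(k+1)) (2*k+1),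
    tri (-(k+1)) (k+1), tri 0 0} : Set (ℝ × ℝ))

/-- Set of squared distances between distinct points of `X`. -/
def sqdSet (X : Set (ℝ × ℝ)) : Set ℝ := {d | ∃ p ∈ X, ∃ q ∈ X, p ≠ q ∧ d = sqd p q}

-- building blocks test
lemma sq_sqrt3 : Real.sqrt 3 ^ 2 = 3 := Real.sq_sqrt (by norm_num)

lemma sqd_tri (a b a' b' : ℤ) :
    sqd (tri a b) (tri a' b') =
      (((a - a') ^ 2 + (a - a') * (b - b') + (b - b') ^ 2 : ℤ) : ℝ) := by
  simp only [sqd, tri]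
  push_cast
  linear_combination (((b : ℝ) - b') ^ 2 / 4) * sq_sqrt3

lemma tri_inj : Function.Injective (fun p : ℤ × ℤ => tri p.1 p.2) := by
  rintro ⟨a, b⟩ ⟨a', b'⟩ h
  simp only [tri, Prod.mk.injEq] at h
  have hs : Real.sqrt 3 ≠ 0 := by positivity
  have hb : (b : ℝ) = b' := by
    have h2 := h.2
    have : (b : ℝ) * Real.sqrt 3 = (b' : ℝ) * Real.sqrt 3 := by linarith
    exact mul_right_cancel₀ hs this
  have ha : (a : ℝ) = a' := by linarith [h.1]
  exact Prod.ext (by exact_mod_cast ha) (by exact_mod_cast hb)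

lemma mem_hull3 {s : Set (ℝ × ℝ)} {v1 v2 v3 : ℝ × ℝ}
    (h1 : v1 ∈ s) (h2 : v2 ∈ s) (h3 : v3 ∈ s) {c1 c2 c3 : ℝ}
    (n1 : 0 ≤ c1) (n2 : 0 ≤ c2) (n3 : 0 ≤ c3) (hs : c1 + c2 + c3 = 1) :
    c1 • v1 + c2 • v2 + c3 • v3 ∈ convexHull ℝ s := by
  have := (convex_convexHull ℝ s).sum_mem (t := (Finset.univ : Finset (Fin 3)))
    (w := ![c1, c2, c3]) (z := ![v1, v2, v3])
    (by intro i _; fin_cases i <;> simpa)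
    (by simp [Fin.sum_univ_three, hs])
    (by intro i _
        fin_cases i
        · exact subset_convexHull ℝ s h1
        · exact subset_convexHull ℝ s h2
        · exact subset_convexHull ℝ s h3)
  simpa [Fin.sum_univ_three] using this

lemma sqrt3_pos : (0:ℝ) < Real.sqrt 3 := Real.sqrt_pos.2 (by norm_num)

lemma hex_sub : hexR 4 ⊆ {p : ℝ × ℝ |
    Real.sqrt 3 * p.1 - p.2 ≤ 4 * Real.sqrt 3 ∧
    -(4 * Real.sqrt 3) ≤ Real.sqrt 3 * p.1 - p.2 ∧
    Real.sqrt 3 * p.1 + p.2 ≤ 4 * Real.sqrt 3 ∧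
    -(4 * Real.sqrt 3) ≤ Real.sqrt 3 * p.1 + p.2 ∧
    p.2 ≤ 2 * Real.sqrt 3 ∧ -(2 * Real.sqrt 3) ≤ p.2} := by
  apply convexHull_min
  · intro p hp
    have h3 := Real.sqrt_nonneg 3
    simp only [Set.mem_insert_iff, Set.mem_singleton_iff] at hp
    rcases hp with h | h | h | h | h | h <;> subst h <;>
      simp only [tri, Set.mem_setOf_eq] <;> push_cast <;>
      refine ⟨by nlinarith, by nlinarith, by nlinarith, by nlinarith, by nlinarith, by nlinarith⟩
  · rintro x hx y hy a b ha hb hab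
    simp only [Set.mem_setOf_eq] at hx hy ⊢
    simp only [Prod.fst_add, Prod.snd_add, Prod.smul_fst, Prod.smul_snd, smul_eq_mul]
    obtain ⟨x1, x2, x3, x4, x5, x6⟩ := hx
    obtain ⟨y1, y2, y3, y4, y5, y6⟩ := hy
    refine ⟨by nlinarith, by nlinarith, by nlinarith, by nlinarith, by nlinarith, by nlinarith⟩

lemma tri_mem_bounds {a b : ℤ} (h : tri a b ∈ hexR 4) :
    -4 ≤ a ∧ a ≤ 4 ∧ -4 ≤ b ∧ b ≤ 4 ∧ -4 ≤ a + b ∧ a + b ≤ 4 := by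
  obtain ⟨h1, h2, h3, h4, h5, h6⟩ := hex_sub h
  simp only [tri] at h1 h2 h3 h4 h5 h6
  have s3 := sqrt3_pos
  have e1 : Real.sqrt 3 * ((a : ℝ) + (b : ℝ) / 2) - (b : ℝ) * Real.sqrt 3 / 2
      = (a : ℝ) * Real.sqrt 3 := by ring
  have e3 : Real.sqrt 3 * ((a : ℝ) + (b : ℝ) / 2) + (b : ℝ) * Real.sqrt 3 / 2
      = ((a : ℝ) + b) * Real.sqrt 3 := by ring
  rw [e1] at h1 h2
  rw [e3] at h3 h4
  have ha1 : (a : ℝ) ≤ 4 := by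
    have := (mul_le_mul_iff_of_pos_right s3).1 (by linarith : (a : ℝ) * Real.sqrt 3 ≤ 4 * Real.sqrt 3)
    linarith
  have ha2 : (-4 : ℝ) ≤ (a : ℝ) := by
    have := (mul_le_mul_iff_of_pos_right s3).1 (by linarith : (-4 : ℝ) * Real.sqrt 3 ≤ (a : ℝ) * Real.sqrt 3)
    linarith
  have hab1 : ((a : ℝ) + b) ≤ 4 := by
    have := (mul_le_mul_iff_of_pos_right s3).1 (by linarith : ((a : ℝ) + b) * Real.sqrt 3 ≤ 4 * Real.sqrt 3)
    linarith
  have hab2 : (-4 : ℝ) ≤ ((a : ℝ) + b) := by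
    have := (mul_le_mul_iff_of_pos_right s3).1
      (by linarith : (-4 : ℝ) * Real.sqrt 3 ≤ ((a : ℝ) + b) * Real.sqrt 3)
    linarith
  have hb1 : (b : ℝ) ≤ 4 := by
    have := (mul_le_mul_iff_of_pos_right s3).1 (by linarith : (b : ℝ) * Real.sqrt 3 ≤ 4 * Real.sqrt 3)
    linarith
  have hb2 : (-4 : ℝ) ≤ (b : ℝ) := by
    have := (mul_le_mul_iff_of_pos_right s3).1 (by linarith : (-4 : ℝ) * Real.sqrt 3 ≤ (b : ℝ) * Real.sqrt 3)
    linarith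
  refine ⟨by exact_mod_cast ha2, by exact_mod_cast ha1, by exact_mod_cast hb2,
    by exact_mod_cast hb1, ?_, ?_⟩
  · have : (-4 : ℝ) ≤ ((a + b : ℤ) : ℝ) := by push_cast; linarith
    exact_mod_cast this
  · have : ((a + b : ℤ) : ℝ) ≤ 4 := by push_cast; linarith
    exact_mod_cast this

lemma tri_mem_hex {a b : ℤ} (ha1 : -4 ≤ a) (ha2 : a ≤ 4) (hb1 : -4 ≤ b) (hb2 : b ≤ 4)
    (hab1 : -4 ≤ a + b) (hab2 : a + b ≤ 4) : tri a b ∈ hexR 4 := by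
  have ra1 : (-4 : ℝ) ≤ (a : ℝ) := by exact_mod_cast ha1
  have ra2 : (a : ℝ) ≤ 4 := by exact_mod_cast ha2
  have rb1 : (-4 : ℝ) ≤ (b : ℝ) := by exact_mod_cast hb1
  have rb2 : (b : ℝ) ≤ 4 := by exact_mod_cast hb2
  have rab1 : (-4 : ℝ) ≤ (a : ℝ) + b := by exact_mod_cast hab1
  have rab2 : (a : ℝ) + b ≤ 4 := by exact_mod_cast hab2
  unfold hexR
  set s : Set (ℝ × ℝ) :=
    {tri 4 0, tri 0 4, tri (-4) 4, tri (-4) 0, tri 0 (-4), tri 4 (-4)} with hsdef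
  have m1 : tri 4 0 ∈ s := by left; rfl
  have m2 : tri 0 4 ∈ s := by right; left; rfl
  have m3 : tri (-4) 4 ∈ s := by right; right; left; rfl
  have m4 : tri (-4) 0 ∈ s := by right; right; right; left; rfl
  have m5 : tri 0 (-4) ∈ s := by right; right; right; right; left; rfl
  have m6 : tri 4 (-4) ∈ s := by right; right; right; right; right; rfl
  rcases le_or_gt 0 (a : ℝ) with hA | hA <;> rcases le_or_gt 0 (b : ℝ) with hB | hB
  · -- a ≥ 0, b ≥ 0
    have key : tri a b = ((a : ℝ)/4 + (1 - a/4 - b/4)/2) • tri 4 0 + ((b : ℝ)/4) • tri 0 4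
        + ((1 - (a : ℝ)/4 - b/4)/2) • tri (-4) 0 := by
      simp only [tri, Prod.smul_mk, Prod.mk_add_mk, Prod.mk.injEq, smul_eq_mul]
      push_cast
      constructor <;> ring
    rw [key]
    exact mem_hull3 m1 m2 m4 (by linarith) (by linarith) (by linarith) (by ring)
  · -- a ≥ 0, b < 0
    rcases le_or_gt 0 ((a : ℝ) + b) with hAB | hAB
    · -- sector 3 : V1, V6, V4
      have key : tri a b = (((a : ℝ) + b)/4 + (1 - a/4)/2) • tri 4 0
          + (-(b : ℝ)/4) • tri 4 (-4) + ((1 - (a : ℝ)/4)/2) • tri (-4) 0 := by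
        simp only [tri, Prod.smul_mk, Prod.mk_add_mk, Prod.mk.injEq, smul_eq_mul]
        push_cast
        constructor <;> ring
      rw [key]
      exact mem_hull3 m1 m6 m4 (by linarith) (by linarith) (by linarith) (by ring)
    · -- sector 4 : V6, V5, V2
      have key : tri a b = ((a : ℝ)/4) • tri 4 (-4)
          + (-((a : ℝ) + b)/4 + (1 + b/4)/2) • tri 0 (-4) + ((1 + (b : ℝ)/4)/2) • tri 0 4 := by
        simp only [tri, Prod.smul_mk, Prod.mk_add_mk, Prod.mk.injEq, smul_eq_mul]
        push_cast
        constructor <;> ring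
      rw [key]
      exact mem_hull3 m6 m5 m2 (by linarith) (by linarith) (by linarith) (by ring)
  · -- a < 0, b ≥ 0
    rcases le_or_gt 0 ((a : ℝ) + b) with hAB | hAB
    · -- sector 5 : V2, V3, V5
      have key : tri a b = (((a : ℝ) + b)/4 + (1 - b/4)/2) • tri 0 4
          + (-(a : ℝ)/4) • tri (-4) 4 + ((1 - (b : ℝ)/4)/2) • tri 0 (-4) := by
        simp only [tri, Prod.smul_mk, Prod.mk_add_mk, Prod.mk.injEq, smul_eq_mul]
        push_cast
        constructor <;> ring
      rw [key]
      exact mem_hull3 m2 m3 m5 (by linarith) (by linarith) (by linarith) (by ring)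
    · -- sector 6 : V3, V4, V1
      have key : tri a b = ((b : ℝ)/4) • tri (-4) 4
          + ((-(a : ℝ) - b)/4 + (1 + a/4)/2) • tri (-4) 0 + ((1 + (a : ℝ)/4)/2) • tri 4 0 := by
        simp only [tri, Prod.smul_mk, Prod.mk_add_mk, Prod.mk.injEq, smul_eq_mul]
        push_cast
        constructor <;> ring
      rw [key]
      exact mem_hull3 m3 m4 m1 (by linarith) (by linarith) (by linarith) (by ring)
  · -- a < 0, b < 0 : sector 2 : V4, V5, V1
    have key : tri a b = (-(a : ℝ)/4 + (1 + a/4 + b/4)/2) • tri (-4) 0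
        + (-(b : ℝ)/4) • tri 0 (-4) + ((1 + (a : ℝ)/4 + b/4)/2) • tri 4 0 := by
      simp only [tri, Prod.smul_mk, Prod.mk_add_mk, Prod.mk.injEq, smul_eq_mul]
      push_cast
      constructor <;> ring
    rw [key]
    exact mem_hull3 m4 m5 m1 (by linarith) (by linarith) (by linarith) (by ring)

noncomputable def S : Finset (ℤ × ℤ) :=
  (Finset.Icc (-4) 4 ×ˢ Finset.Icc (-4) 4).filter (fun p => -4 ≤ p.1 + p.2 ∧ p.1 + p.2 ≤ 4)

def D : Finset ℤ :=
  {1, 3, 4, 7, 9, 12, 13, 16, 19, 21, 25, 27, 28, 31, 36, 37, 39, 43, 48, 49, 52, 57, 64}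

lemma Scard : S.card = 61 := by decide

lemma Dcard : D.card = 23 := by decide

lemma key_eq : triLattice ∩ hexR 4 = (fun p : ℤ × ℤ => tri p.1 p.2) '' ↑S := by
  ext p
  constructor
  · rintro ⟨⟨a, b, rfl⟩, hp⟩
    obtain ⟨h1, h2, h3, h4, h5, h6⟩ := tri_mem_bounds hp
    exact ⟨(a, b), by simp [S, Finset.mem_filter, Finset.mem_Icc]; omega, rfl⟩
  · rintro ⟨⟨a, b⟩, hab, rfl⟩
    simp only [S, Finset.coe_filter, Finset.mem_product, Finset.mem_Icc,
      Set.mem_setOf_eq, Finset.mem_coe] at hab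
    exact ⟨⟨a, b, rfl⟩,
      tri_mem_hex hab.1.1.1 hab.1.1.2 hab.1.2.1 hab.1.2.2 hab.2.1 hab.2.2⟩

lemma pairD : ∀ x ∈ Finset.Icc (-8 : ℤ) 8, ∀ y ∈ Finset.Icc (-8 : ℤ) 8,
    -8 ≤ x + y → x + y ≤ 8 → ¬(x = 0 ∧ y = 0) → x ^ 2 + x * y + y ^ 2 ∈ D := by decide

lemma witD : ∀ n ∈ D, ∃ q ∈ S, ((-4 : ℤ), (0 : ℤ)) ≠ q ∧
    (-4 - q.1) ^ 2 + (-4 - q.1) * (0 - q.2) + (0 - q.2) ^ 2 = n := by decide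

lemma base_mem : ((-4 : ℤ), (0 : ℤ)) ∈ S := by decide

lemma sqdEq : sqdSet (triLattice ∩ hexR 4) = (fun n : ℤ => (n : ℝ)) '' ↑D := by
  rw [key_eq]
  ext d
  simp only [sqdSet, Set.mem_setOf_eq, Set.mem_image]
  constructor
  · rintro ⟨p, ⟨⟨a, b⟩, haS, rfl⟩, q, ⟨⟨c, e⟩, hcS, rfl⟩, hne, rfl⟩
    simp only [Finset.mem_coe, S, Finset.mem_filter, Finset.mem_product, Finset.mem_Icc] at haS hcS
    have hne' : ¬(a - c = 0 ∧ b - e = 0) := by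
      rintro ⟨h1, h2⟩
      exact hne (congrArg (fun p : ℤ × ℤ => tri p.1 p.2) (Prod.ext (by omega) (by omega) : ((a, b) : ℤ × ℤ) = (c, e)))
    refine ⟨(a - c) ^ 2 + (a - c) * (b - e) + (b - e) ^ 2, ?_, (sqd_tri a b c e).symm⟩
    exact Finset.mem_coe.mpr (pairD _ (Finset.mem_Icc.mpr (by omega)) _
      (Finset.mem_Icc.mpr (by omega)) (by omega) (by omega) hne')
  · rintro ⟨n, hn, rfl⟩
    obtain ⟨q, hqS, hne, hq⟩ := witD n (Finset.mem_coe.mp hn)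
    refine ⟨tri (-4) 0, ⟨((-4, 0) : ℤ × ℤ), Finset.mem_coe.mpr base_mem, rfl⟩,
      tri q.1 q.2, ⟨q, Finset.mem_coe.mpr hqS, rfl⟩, ?_, ?_⟩
    · intro h
      exact hne (tri_inj (a₁ := ((-4, 0) : ℤ × ℤ)) (a₂ := q) h)
    · rw [sqd_tri]
      exact_mod_cast congrArg (fun m : ℤ => (m : ℝ)) hq.symm

theorem hexagon_side4_twentythree_distance :
    (triLattice ∩ hexR 4).ncard = 61 ∧
      (sqdSet (triLattice ∩ hexR 4)).ncard = 23 ∧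
      (64 : ℝ) ∈ sqdSet (triLattice ∩ hexR 4) ∧
      (61 : ℝ) ∉ sqdSet (triLattice ∩ hexR 4) ∧
      (63 : ℝ) ∉ sqdSet (triLattice ∩ hexR 4) := by
  have hinj : Function.Injective (fun n : ℤ => (n : ℝ)) := fun m n h => Int.cast_injective h
  refine ⟨?_, ?_, ?_, ?_, ?_⟩
  · rw [key_eq, Set.ncard_image_of_injective _ tri_inj, Set.ncard_coe_finset, Scard]
  · rw [sqdEq, Set.ncard_image_of_injective _ hinj, Set.ncard_coe_finset, Dcard]
  · rw [sqdEq]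
    exact ⟨64, Finset.mem_coe.mpr (by decide), by norm_num⟩
  · rw [sqdEq]
    rintro ⟨n, hn, he⟩
    have he' : ((n : ℤ) : ℝ) = 61 := he
    have : n = 61 := by exact_mod_cast he'
    subst this
    exact absurd (Finset.mem_coe.mp hn) (by decide)
  · rw [sqdEq]
    rintro ⟨n, hn, he⟩
    have he' : ((n : ℤ) : ℝ) = 63 := he
    have : n = 63 := by exact_mod_cast he'
    subst this
    exact absurd (Finset.mem_coe.mp hn) (by decide)
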